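/- Let a be a positive integer and let X be the nonsingular projective toric 4-fold corresponding to the fan Σ with primitive generators G(Σ) = {x_1,…,x_7} and primitive relations x_1 + x_7 = 0, x_2 + x_3 + x_4 = a·x_1, x_4 + x_5 + x_6 = (a+1)·x_1, x_5 + x_6 + x_7 = x_2 + x_3, and x_1 + x_2 + x_3 = x_5 + x_6. Then X admits no totally nondegenerate finite morphism from an abelian surface. (For a = 1, X is the nonsingular toric Fano 4-fold of type G_1.) -/

import Mathlib

open Finset

/-- An abelian surface over `ℂ`, recorded abstractly through its group `Div` of
divisor classes modulo algebraic equivalence, the intersection pairing, and the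
effectivity and ampleness predicates.  The listed axioms are standard facts
about divisors on an abelian surface. -/
structure AbelianSurface (Div : Type) [AddCommGroup Div] : Type where
  /-- the intersection pairing `D.E` on the abelian surface -/
  inter : Div →+ Div →+ ℤ
  inter_comm : ∀ D E : Div, inter D E = inter E D
  /-- `Effective D` ↔ `D` is the class of a (nonzero or zero) effective divisor -/
  Effective : Div → Prop
  effective_zero : Effective 0
  effective_add : ∀ {D E : Div}, Effective D → Effective E → Effective (D + E)
  /-- on an abelian surface two effective divisors intersect nonnegatively -/
  inter_nonneg_of_effective : ∀ {D E : Div}, Effective D → Effective E → 0 ≤ inter D E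
  /-- `Ample D` ↔ `D` is the class of an ample divisor -/
  Ample : Div → Prop
  /-- on an abelian surface an effective divisor with positive self-intersection is ample -/
  ample_of_effective_of_sq_pos : ∀ {D : Div}, Effective D → 0 < inter D D → Ample D
  /-- an ample divisor meets every nonzero effective divisor positively -/
  inter_pos_of_ample : ∀ {D E : Div}, Ample D → Effective E → E ≠ 0 → 0 < inter D E
  /-- an ample divisor has positive self-intersection -/
  sq_pos_of_ample : ∀ {D : Div}, Ample D → 0 < inter D D

/-- A complete nonsingular toric 4-fold `X`, presented by the primitive
generators `x_1, …, x_n ∈ N = ℤ⁴` of its fan `Σ` together with the predicate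
`IsCone` recording which subsets of the rays span a cone of `Σ`. -/
structure ToricFourfold (n : ℕ) : Type where
  /-- the set `G(Σ)` of primitive generators `x_1, …, x_n` of `Σ` in `N = ℤ⁴` -/
  gen : Fin n → Fin 4 → ℤ
  gen_injective : Function.Injective gen
  /-- `IsCone S` ↔ the rays `{x_i : i ∈ S}` span a cone of `Σ` -/
  IsCone : Finset (Fin n) → Prop
  isCone_empty : IsCone ∅
  isCone_singleton : ∀ i : Fin n, IsCone {i}
  isCone_mono : ∀ {S T : Finset (Fin n)}, S ⊆ T → IsCone T → IsCone S
  /-- nonsingularity: the generators of each cone form part of a `ℤ`-basis of `N` -/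
  nonsingular : ∀ {S : Finset (Fin n)}, IsCone S →
    ∃ b : Module.Basis (Fin 4) ℤ (Fin 4 → ℤ), ∃ ι : {x // x ∈ S} → Fin 4,
      Function.Injective ι ∧ ∀ i : {x // x ∈ S}, gen i.1 = b (ι i)
  /-- completeness: the cones of `Σ` cover `N_ℚ = ℚ⁴` -/
  complete : ∀ v : Fin 4 → ℚ, ∃ S : Finset (Fin n), IsCone S ∧
    ∃ c : Fin n → ℚ, (∀ i, 0 ≤ c i) ∧ (∀ i, i ∉ S → c i = 0) ∧
      ∀ k, v k = ∑ i, c i * (gen i k : ℚ)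

/-- A primitive collection of the fan of `X` (in the sense of Batyrev):
a minimal subset of the set of rays not spanning a cone. -/
def ToricFourfold.IsPrimitiveCollection {n : ℕ} (X : ToricFourfold n)
    (P : Finset (Fin n)) : Prop :=
  ¬ X.IsCone P ∧ ∀ Q : Finset (Fin n), Q ⊂ P → X.IsCone Q

/-- An (equivariant) isomorphism of complete nonsingular toric 4-folds,
i.e. an isomorphism of the corresponding fans. -/
def ToricFourfold.Iso {m n : ℕ} (X : ToricFourfold m) (Y : ToricFourfold n) : Prop :=
  ∃ (e : Fin m ≃ Fin n) (g : Matrix (Fin 4) (Fin 4) ℤ), IsUnit g.det ∧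
    (∀ i, Y.gen (e i) = g.mulVec (X.gen i)) ∧
    ∀ S : Finset (Fin m), X.IsCone S ↔ Y.IsCone (S.image e)

/-- A projective nonsingular toric 4-fold: a complete nonsingular toric 4-fold
together with the predicate recording which `T_N`-invariant divisors
`∑ i, c i • D i` are ample, and (projectivity) an ample effective such divisor. -/
structure ProjToricFourfold (n : ℕ) : Type extends ToricFourfold n where
  /-- `IsAmple c` ↔ the `T_N`-invariant divisor `∑ i, c i • D i` is ample on `X` -/
  IsAmple : (Fin n → ℤ) → Prop
  /-- projectivity: there is an ample effective `T_N`-invariant divisor -/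
  exists_ample : ∃ c : Fin n → ℤ, (∀ i, 0 ≤ c i) ∧ IsAmple c

/-- `X` is Fano: the anticanonical divisor `∑ i, D i` is ample. -/
def ProjToricFourfold.IsFano {n : ℕ} (X : ProjToricFourfold n) : Prop :=
  X.IsAmple fun _ => 1

/-- A totally nondegenerate finite morphism `φ : A → X` from an abelian surface
`A` to a complete nonsingular toric 4-fold `X`, recorded through the pullbacks
`C i = φ*(D i)` of the `T_N`-invariant prime divisors `D 1, …, D n` of `X`:
total nondegeneracy says that each `D i` meets `φ(A)`, so that each `C i` is a
nonzero effective divisor on `A`. -/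
structure TNDMorphism {n : ℕ} (X : ToricFourfold n) {Div : Type} [AddCommGroup Div]
    (A : AbelianSurface Div) : Type where
  /-- the pullbacks `C i = φ*(D i)` -/
  C : Fin n → Div
  effective : ∀ i, A.Effective (C i)
  /-- total nondegeneracy: `D i ∩ φ(A) ≠ ∅`, so `C i` is a nonzero effective divisor -/
  ne_zero : ∀ i, C i ≠ 0
  /-- if `{x i, x j}` spans no cone of `Σ` then `D i ∩ D j = ∅`, hence the
  pullbacks have intersection number zero -/
  inter_eq_zero : ∀ {i j : Fin n}, i ≠ j → ¬ X.IsCone {i, j} → A.inter (C i) (C j) = 0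
  /-- for every `m ∈ M` the pullback of the principal divisor
  `div 𝐞(m) = ∑ i ⟨m, x i⟩ D i` is (algebraically equivalent to) zero -/
  principal_rel : ∀ m : Fin 4 → ℤ, ∑ i, (∑ k, m k * X.gen i k) • C i = 0

/-- A totally nondegenerate finite morphism to a projective nonsingular toric
4-fold; finiteness of `φ` moreover makes pullbacks of ample divisors ample. -/
structure TNDMorphismProj {n : ℕ} (X : ProjToricFourfold n) {Div : Type} [AddCommGroup Div]
    (A : AbelianSurface Div) extends TNDMorphism X.toToricFourfold A : Type where
  /-- the pullback of an ample divisor under the finite morphism `φ` is ample -/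
  pull_ample : ∀ c : Fin n → ℤ, X.IsAmple c → A.Ample (∑ i, c i • C i)

/-- `X` admits a totally nondegenerate finite morphism from an abelian surface. -/
def ProjToricFourfold.HasTND {n : ℕ} (X : ProjToricFourfold n) : Prop :=
  ∃ (Div : Type) (inst : AddCommGroup Div) (A : @AbelianSurface Div inst),
    Nonempty (@TNDMorphismProj n X Div inst A)

/-- A totally nondegenerate embedding `φ : A ↪ X` of an abelian surface into a
projective nonsingular toric 4-fold: a totally nondegenerate finite morphism
which is a closed embedding.  Besides the finite-morphism data we record the
intersection-theoretic data available for an embedded surface: the quadruple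
intersection numbers `quad i j k l = D i · D j · D k · D l` on `X`, the class
`[A] = ∑ k l, aClass k l • (D k · D l)` of `A` in the Chow group `A²(X)`, the
compatibility `(φ*D i)·(φ*D j) = D i · D j · [A]`, and Van de Ven's relation
`c₂(X)·[A] = [A]²` where `c₂(X) = ∑_{i<j} D i · D j` for a nonsingular complete
toric variety. -/
structure TNDEmbedding {n : ℕ} (X : ProjToricFourfold n) {Div : Type} [AddCommGroup Div]
    (A : AbelianSurface Div) : Type extends TNDMorphismProj X A where
  /-- the intersection numbers `D i · D j · D k · D l` on `X` -/
  quad : Fin n → Fin n → Fin n → Fin n → ℤ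
  /-- the coefficients of the class `[A] ∈ A²(X)` in terms of the classes `D k · D l` -/
  aClass : Fin n → Fin n → ℤ
  /-- for the embedded surface `A ⊂ X`, `(φ*D i)·(φ*D j) = D i · D j · [A]` -/
  inter_eq_quad : ∀ i j : Fin n,
    A.inter (C i) (C j) = ∑ k, ∑ l, aClass k l * quad i j k l
  /-- Van de Ven's relation `c₂(X)·[A] = [A]²` -/
  van_de_ven : ∑ i, ∑ j ∈ Finset.Ioi i, A.inter (C i) (C j) =
    ∑ k, ∑ l, ∑ k', ∑ l', aClass k l * aClass k' l' * quad k l k' l'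

/-- `X` admits a totally nondegenerate embedding of an abelian surface. -/
def ProjToricFourfold.HasTNDEmbedding {n : ℕ} (X : ProjToricFourfold n) : Prop :=
  ∃ (Div : Type) (inst : AddCommGroup Div) (A : @AbelianSurface Div inst),
    Nonempty (@TNDEmbedding n X Div inst A)

/-- `ψ : Y → X` is a 2-blow-up: an equivariant blow-up of `X` along a
`T_N`-invariant subvariety of codimension 2.  On fans this is the star
subdivision of the fan of `X` at a 2-dimensional cone `{x i, x j}`, the new ray
(indexed last) being generated by `x i + x j`. -/
def IsTwoBlowUp {m n : ℕ} (Y : ProjToricFourfold m) (X : ProjToricFourfold n) : Prop :=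
  ∃ h : m = n + 1, ∃ i j : Fin n, i ≠ j ∧ X.IsCone {i, j} ∧
    (∀ k : Fin n, Y.gen (finCongr h.symm k.castSucc) = X.gen k) ∧
    Y.gen (finCongr h.symm (Fin.last n)) = X.gen i + X.gen j ∧
    ∀ S : Finset (Fin n),
      (Y.IsCone (S.image fun k => finCongr h.symm k.castSucc) ↔
        X.IsCone S ∧ ¬ {i, j} ⊆ S) ∧
      (Y.IsCone (insert (finCongr h.symm (Fin.last n))
          (S.image fun k => finCongr h.symm k.castSucc)) ↔
        ¬ {i, j} ⊆ S ∧ X.IsCone (S ∪ {i, j}))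

/-- The fan of `X` splits (after a change of coordinates in `N = ℤ⁴`) as the
product of two 2-dimensional complete fans, i.e. `X ≅ X₁ × X₂` for nonsingular
complete toric surfaces `X₁`, `X₂`.  When `X` is moreover Fano, the two factors
are nonsingular toric del Pezzo surfaces. -/
def ProjToricFourfold.IsProductOfSurfaces {n : ℕ} (X : ProjToricFourfold n) : Prop :=
  ∃ g : Matrix (Fin 4) (Fin 4) ℤ, IsUnit g.det ∧
    ∃ σ : Fin n → Bool,
      (∀ i, σ i = true → g.mulVec (X.gen i) 2 = 0 ∧ g.mulVec (X.gen i) 3 = 0) ∧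
      (∀ i, σ i = false → g.mulVec (X.gen i) 0 = 0 ∧ g.mulVec (X.gen i) 1 = 0) ∧
      ∀ S : Finset (Fin n), X.IsCone S ↔
        (X.IsCone (S.filter fun i => σ i = true) ∧ X.IsCone (S.filter fun i => σ i = false))


private lemma exists_pc_of_not_isCone {n : ℕ} (X : ToricFourfold n) :
    ∀ S : Finset (Fin n), ¬ X.IsCone S → ∃ P ⊆ S, X.IsPrimitiveCollection P := by
  classical
  intro S
  induction S using Finset.strongInduction with
  | _ S ih =>
    intro h
    by_cases hall : ∀ Q ⊂ S, X.IsCone Q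
    · exact ⟨S, subset_rfl, h, hall⟩
    · push_neg at hall
      obtain ⟨Q, hQS, hQ⟩ := hall
      obtain ⟨P, hPQ, hP⟩ := ih Q hQS hQ
      exact ⟨P, hPQ.trans hQS.subset, hP⟩

private lemma coord_repr (φ : (Fin 4 → ℤ) →ₗ[ℤ] ℤ) (v : Fin 4 → ℤ) :
    ∑ k, φ (Pi.single k 1) * v k = φ v := by
  have hv : v = ∑ k, v k • Pi.single k (1 : ℤ) := by
    funext j
    simp [Pi.single_apply]
  conv_rhs => rw [hv]
  rw [map_sum]
  simp only [map_smul, smul_eq_mul]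
  exact Finset.sum_congr rfl fun k _ => mul_comm _ _

/-- **Example 3.6.** Let `a` be a positive integer and let `X` be the
nonsingular projective toric 4-fold corresponding to the fan `Σ` with
`G(Σ) = {x_1, …, x_7}` and primitive relations
`x_1 + x_7 = 0`, `x_2 + x_3 + x_4 = a x_1`, `x_4 + x_5 + x_6 = (a+1) x_1`,
`x_5 + x_6 + x_7 = x_2 + x_3` and `x_1 + x_2 + x_3 = x_5 + x_6`.
Then `X` admits no totally nondegenerate finite morphism from an abelian
surface.  (For `a = 1`, `X` is the nonsingular toric Fano 4-fold of type `𝒢₁`.)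
Rays are indexed from `0`, so `x_k` is `X.gen (k-1)`. -/
theorem no_tnd_morphism_G1_family (a : ℤ) (ha : 0 < a) (X : ProjToricFourfold 7)
    (hPC : ∀ P : Finset (Fin 7), X.toToricFourfold.IsPrimitiveCollection P ↔
      (P = {0, 6} ∨ P = {1, 2, 3} ∨ P = {3, 4, 5} ∨ P = {4, 5, 6} ∨ P = {0, 1, 2}))
    (h1 : X.gen 0 + X.gen 6 = 0)
    (h2 : X.gen 1 + X.gen 2 + X.gen 3 = a • X.gen 0)
    (h3 : X.gen 3 + X.gen 4 + X.gen 5 = (a + 1) • X.gen 0)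
    (h4 : X.gen 4 + X.gen 5 + X.gen 6 = X.gen 1 + X.gen 2)
    (h5 : X.gen 0 + X.gen 1 + X.gen 2 = X.gen 4 + X.gen 5) :
    ¬ X.HasTND := by
  classical
  rintro ⟨Div, inst, A, ⟨T⟩⟩
  -- {1,2,4,5} spans a cone
  have hScone : X.toToricFourfold.IsCone ({1, 2, 4, 5} : Finset (Fin 7)) := by
    by_contra hcon
    obtain ⟨P, hPS, hP⟩ := exists_pc_of_not_isCone _ _ hcon
    rcases (hPC P).1 hP with rfl | rfl | rfl | rfl | rfl <;> revert hPS <;> decide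
  obtain ⟨b, ι, hι, hgen⟩ := X.toToricFourfold.nonsingular hScone
  -- duality values
  have hd : ∀ s t : {x // x ∈ ({1, 2, 4, 5} : Finset (Fin 7))},
      (b.coord (ι t)) (X.gen s.1) = if s = t then 1 else 0 := by
    intro s t
    rw [hgen s, Module.Basis.coord_apply, Module.Basis.repr_self_apply]
    by_cases hst : s = t
    · simp [hst]
    · rw [if_neg (fun hc => hst (hι hc)), if_neg hst]
  -- the relations among the pullbacks coming from principal divisors
  have hE : ∀ s : {x // x ∈ ({1, 2, 4, 5} : Finset (Fin 7))},
      ∑ i, (b.coord (ι s)) (X.gen i) • T.C i = 0 := by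
    intro s
    have h := T.principal_rel (fun k => b.coord (ι s) (Pi.single k 1))
    have hrw : ∀ i : Fin 7, (∑ k, (b.coord (ι s)) (Pi.single k 1) * X.gen i k)
        = (b.coord (ι s)) (X.gen i) := fun i => coord_repr _ _
    simp only [hrw] at h
    exact h
  have hg0 : X.gen 0 = X.gen 4 + X.gen 5 - X.gen 1 - X.gen 2 := by
    rw [← h5]; abel
  have hg6 : X.gen 6 = -X.gen 0 := eq_neg_of_add_eq_zero_right h1
  have hg3 : X.gen 3 = a • X.gen 0 - X.gen 1 - X.gen 2 := by
    rw [← h2]; abel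
  -- the main linear relations among intersection numbers with C 0
  have main : ∀ (s : {x // x ∈ ({1, 2, 4, 5} : Finset (Fin 7))}) (d1 d2 d4 d5 : ℤ),
      (b.coord (ι s)) (X.gen 1) = d1 → (b.coord (ι s)) (X.gen 2) = d2 →
      (b.coord (ι s)) (X.gen 4) = d4 → (b.coord (ι s)) (X.gen 5) = d5 →
      (d4 + d5 - d1 - d2) * A.inter (T.C 0) (T.C 0)
        + d1 * A.inter (T.C 0) (T.C 1) + d2 * A.inter (T.C 0) (T.C 2)
        + (a * (d4 + d5 - d1 - d2) - d1 - d2) * A.inter (T.C 0) (T.C 3)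
        + d4 * A.inter (T.C 0) (T.C 4) + d5 * A.inter (T.C 0) (T.C 5)
        - (d4 + d5 - d1 - d2) * A.inter (T.C 0) (T.C 6) = 0 := by
    intro s d1 d2 d4 d5 e1 e2 e4 e5
    have h := hE s
    rw [Fin.sum_univ_seven] at h
    rw [hg3, hg6, hg0] at h
    simp only [map_add, map_sub, map_neg, map_smul, e1, e2, e4, e5, smul_eq_mul] at h
    have h' := congrArg (fun D => A.inter D (T.C 0)) h
    simp only [map_add, map_sub, map_neg, map_zsmul, map_zero,
      AddMonoidHom.add_apply, AddMonoidHom.sub_apply, AddMonoidHom.neg_apply,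
      AddMonoidHom.zero_apply, AddMonoidHom.coe_smul, Pi.smul_apply, smul_eq_mul] at h'
    have hcomm : ∀ i : Fin 7, A.inter (T.C i) (T.C 0) = A.inter (T.C 0) (T.C i) :=
      fun i => A.inter_comm _ _
    simp only [hcomm] at h'
    linear_combination h'
  have hq6 : A.inter (T.C 0) (T.C 6) = 0 :=
    T.inter_eq_zero (by decide) ((hPC {0, 6}).2 (Or.inl rfl)).1
  have nn : ∀ i, 0 ≤ A.inter (T.C 0) (T.C i) :=
    fun i => A.inter_nonneg_of_effective (T.effective 0) (T.effective i)
  have E1 := main ⟨1, by decide⟩ 1 0 0 0 (by simpa using hd ⟨1, by decide⟩ ⟨1, by decide⟩)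
    (by simpa using hd ⟨2, by decide⟩ ⟨1, by decide⟩)
    (by simpa using hd ⟨4, by decide⟩ ⟨1, by decide⟩)
    (by simpa using hd ⟨5, by decide⟩ ⟨1, by decide⟩)
  have E2 := main ⟨2, by decide⟩ 0 1 0 0 (by simpa using hd ⟨1, by decide⟩ ⟨2, by decide⟩)
    (by simpa using hd ⟨2, by decide⟩ ⟨2, by decide⟩)
    (by simpa using hd ⟨4, by decide⟩ ⟨2, by decide⟩)
    (by simpa using hd ⟨5, by decide⟩ ⟨2, by decide⟩)
  have E4 := main ⟨4, by decide⟩ 0 0 1 0 (by simpa using hd ⟨1, by decide⟩ ⟨4, by decide⟩)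
    (by simpa using hd ⟨2, by decide⟩ ⟨4, by decide⟩)
    (by simpa using hd ⟨4, by decide⟩ ⟨4, by decide⟩)
    (by simpa using hd ⟨5, by decide⟩ ⟨4, by decide⟩)
  have E5 := main ⟨5, by decide⟩ 0 0 0 1 (by simpa using hd ⟨1, by decide⟩ ⟨5, by decide⟩)
    (by simpa using hd ⟨2, by decide⟩ ⟨5, by decide⟩)
    (by simpa using hd ⟨4, by decide⟩ ⟨5, by decide⟩)
    (by simpa using hd ⟨5, by decide⟩ ⟨5, by decide⟩)
  -- from E4 : q0 + a q3 + q4 - q6 = 0 deduce vanishing of the intersections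
  have hmul : 0 ≤ a * A.inter (T.C 0) (T.C 3) := mul_nonneg ha.le (nn 3)
  have hq0 : A.inter (T.C 0) (T.C 0) = 0 := by linarith [E4, nn 0, nn 4, hq6, hmul]
  have hq4 : A.inter (T.C 0) (T.C 4) = 0 := by linarith [E4, nn 0, nn 4, hq6, hmul]
  have hq3 : A.inter (T.C 0) (T.C 3) = 0 := by
    have ha3 : a * A.inter (T.C 0) (T.C 3) = 0 := by
      linarith [E4, nn 0, nn 4, hq6, hmul]
    exact (mul_eq_zero.mp ha3).resolve_left ha.ne'
  rw [hq3] at E1 E2 E5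
  have hq5 : A.inter (T.C 0) (T.C 5) = 0 := by linear_combination E5 - hq0 + hq6
  have hq1 : A.inter (T.C 0) (T.C 1) = 0 := by linear_combination E1 + hq0 - hq6
  have hq2 : A.inter (T.C 0) (T.C 2) = 0 := by linear_combination E2 + hq0 - hq6
  -- ampleness gives the contradiction
  obtain ⟨c, -, hcamp⟩ := X.exists_ample
  have hAmp := T.pull_ample c hcamp
  have hpos := A.inter_pos_of_ample hAmp (T.effective 0) (T.ne_zero 0)
  have hz : A.inter (∑ i, c i • T.C i) (T.C 0) = 0 := by
    rw [A.inter_comm]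
    rw [map_sum, Fin.sum_univ_seven]
    simp only [map_zsmul, smul_eq_mul]
    rw [hq0, hq1, hq2, hq3, hq4, hq5, hq6]
    ring
  rw [hz] at hpos
  exact lt_irrefl 0 hpos
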